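/- Let 𝓕 be a family of subsets of a finite set X, let Y ⊆ X, and let 𝓕|_Y = {A ∩ Y : A ∈ 𝓕}. Then 𝔣𝔯(𝓕|_Y) ≤ 𝔣𝔯(𝓕). -/

import Mathlib

open Cardinal

noncomputable section

/-- The underlying set of the ordinal `ω_n`, the least ordinal of cardinality `ℵ_n`,
realized as a type. -/
abbrev OmegaN (n : ℕ) : Type := ((Cardinal.aleph n).ord).ToType

/-- `n` is *free* for the family `𝓕` of finite sets: for every set mapping
`S : [ω_n]^{<ω} → [ω_n]^{<ω}` there is a bijection `u` from `⋃ 𝓕` onto a subset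
`Y = u '' (⋃ 𝓕)` of `ω_n` such that `S (u '' A) ∩ Y ⊆ u '' A` for all `A ∈ 𝓕`. -/
def IsFree {α : Type*} [DecidableEq α] (𝓕 : Finset (Finset α)) (n : ℕ) : Prop :=
  ∀ S : Finset (OmegaN n) → Finset (OmegaN n),
    ∃ u : α → OmegaN n, Set.InjOn u ↑(𝓕.sup id) ∧
      ∀ A ∈ 𝓕, S (A.image u) ∩ (𝓕.sup id).image u ⊆ A.image u

/-- The index `𝔣𝔯 𝓕`: the least `n` which is free for `𝓕`. -/
noncomputable def fr {α : Type*} [DecidableEq α] (𝓕 : Finset (Finset α)) : ℕ :=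
  sInf {n | IsFree 𝓕 n}

/-- Conditions (1)–(4) of a nested-orders family on `X`,
where a sequence `(t₁, …, t_k)` is represented by the list `[t₁, …, t_k]`. -/
def NestedBase {α : Type*} (X : Set α) (S : Set (List α)) : Prop :=
  (∀ l ∈ S, ∀ x ∈ l, x ∈ X) ∧
  (∀ t ∈ X, [t] ∈ S) ∧
  (∀ l ∈ S, l.Nodup) ∧
  (∀ (l : List α) (t : α), l ++ [t] ∈ S → l ∈ S) ∧
  (∀ (l : List α) (s t : α), l ++ [s, t] ∈ S → l ++ [t] ∈ S) ∧
  (∀ (l : List α) (s t u : α), l ++ [s, t] ∈ S → l ++ [t, u] ∈ S → l ++ [s, u] ∈ S)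

/-- A nested-orders family on `X`: conditions (1)–(5). -/
def IsNestedOrders {α : Type*} (X : Set α) (S : Set (List α)) : Prop :=
  NestedBase X S ∧
  ∀ (l : List α) (s t : α), l ++ [t] ∈ S → l ++ [s] ∈ S → t ≠ s →
    (l ++ [t, s] ∈ S ∨ l ++ [s, t] ∈ S)

/-- An `n`-nested-orders family on `X`: sequences of length at most `n+2`,
conditions (1)–(4), and condition (5) for `k < n`. -/
def IsNNestedOrders {α : Type*} (n : ℕ) (X : Set α) (S : Set (List α)) : Prop :=
  NestedBase X S ∧
  (∀ l ∈ S, l.length ≤ n + 2) ∧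
  ∀ (l : List α) (s t : α), l.length < n → l ++ [t] ∈ S → l ++ [s] ∈ S → t ≠ s →
    (l ++ [t, s] ∈ S ∨ l ++ [s, t] ∈ S)

/-- `A` satisfies the defining condition of membership in `𝓕_{𝔖,n}`: whenever
`(t₁, …, t_{n+2}) ∈ 𝔖` and `t₁, …, t_{n+1} ∈ A`, also `t_{n+2} ∈ A`. -/
def MemFam {α : Type*} (n : ℕ) (S : Set (List α)) (A : Finset α) : Prop :=
  ∀ (l : List α) (t : α), l.length = n + 1 → l ++ [t] ∈ S →
    (∀ x ∈ l, x ∈ A) → t ∈ A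

/-- The index `𝔫𝔬 𝓕`: the least `n` for which there is an `n`-nested-orders family `𝔖`
on `⋃ 𝓕` with `𝓕 ⊆ 𝓕_{𝔖,n}`. -/
noncomputable def no {α : Type*} [DecidableEq α] (𝓕 : Finset (Finset α)) : ℕ :=
  sInf {n | ∃ S : Set (List α),
    IsNNestedOrders n ↑(𝓕.sup id) S ∧ ∀ A ∈ 𝓕, MemFam n S A}

section Aux
set_option maxHeartbeats 1000000

private lemma mk_finsets_le {β : Type} (A : Set β) :
    #{B : Finset β | ↑B ⊆ A} ≤ max #A ℵ₀ := by
  classical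
  have hsub : {B : Finset β | ↑B ⊆ A} ⊆
      Set.range (fun C : Finset A => C.image Subtype.val) := by
    intro B hB
    refine ⟨B.attach.map ⟨fun x => ⟨x.1, hB (Finset.mem_coe.mpr x.2)⟩,
      fun x y hxy => Subtype.ext (by simpa using congrArg Subtype.val hxy)⟩, ?_⟩
    ext b
    simp only [Finset.mem_image, Finset.mem_map, Finset.mem_attach,
      Function.Embedding.coeFn_mk, true_and]
    constructor
    · rintro ⟨c, ⟨x, rfl⟩, rfl⟩; exact x.2
    · intro hb; exact ⟨⟨b, hB (Finset.mem_coe.mpr hb)⟩, ⟨⟨b, hb⟩, rfl⟩, rfl⟩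
  calc #{B : Finset β | ↑B ⊆ A}
      ≤ #(Set.range (fun C : Finset A => C.image Subtype.val)) :=
        mk_le_mk_of_subset hsub
    _ ≤ #(Finset A) := mk_range_le
    _ ≤ max #A ℵ₀ := by
        rcases finite_or_infinite A with h | h
        · exact le_max_of_le_right Cardinal.mk_le_aleph0
        · rw [Cardinal.mk_finset_of_infinite]; exact le_max_left _ _

private lemma exists_closure {β : Type} (S : Finset β → Finset β) (T : Set β)
    (hT : ∀ B : Finset β, ↑B ⊆ T → ↑(S B) ⊆ T)
    (M₀ : Set β) (hM₀T : M₀ ⊆ T) {κ : Cardinal} (hκ : ℵ₀ ≤ κ) (hM₀ : #M₀ ≤ κ) :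
    ∃ M : Set β, M₀ ⊆ M ∧ M ⊆ T ∧ (∀ B : Finset β, ↑B ⊆ M → ↑(S B) ⊆ M) ∧ #M ≤ κ := by
  classical
  obtain ⟨f, hf0, hfs⟩ : ∃ f : ℕ → Set β, f 0 = M₀ ∧
      ∀ n, f (n + 1) = f n ∪ ⋃ B : {B : Finset β // ↑B ⊆ f n}, (↑(S B.1) : Set β) := by
    refine ⟨fun n => (fun A : Set β =>
      A ∪ ⋃ B : {B : Finset β // ↑B ⊆ A}, (↑(S B.1) : Set β))^[n] M₀, rfl, fun n => ?_⟩
    exact Function.iterate_succ_apply' _ n M₀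
  have hmono : Monotone f := monotone_nat_of_le_succ (by
    intro n; rw [hfs]; exact Set.subset_union_left)
  have hT' : ∀ n, f n ⊆ T := by
    intro n; induction n with
    | zero => rw [hf0]; exact hM₀T
    | succ n ih =>
        rw [hfs]
        exact Set.union_subset ih (Set.iUnion_subset fun B => hT B.1 (B.2.trans ih))
  have hcard : ∀ n, #(f n) ≤ κ := by
    intro n; induction n with
    | zero => rw [hf0]; exact hM₀
    | succ n ih =>
        rw [hfs]
        refine (Cardinal.mk_union_le _ _).trans ?_
        have h1 : #(⋃ B : {B : Finset β // ↑B ⊆ f n}, (↑(S B.1) : Set β)) ≤ κ := by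
          refine (Cardinal.mk_iUnion_le _).trans ?_
          have hidx : #{B : Finset β // ↑B ⊆ f n} ≤ κ :=
            (mk_finsets_le (f n)).trans (max_le ih hκ)
          have hsup : ⨆ B : {B : Finset β // ↑B ⊆ f n}, #(↑(S B.1) : Set β) ≤ ℵ₀ :=
            ciSup_le' fun B => Cardinal.mk_le_aleph0
          calc #{B : Finset β // ↑B ⊆ f n}
                * ⨆ B : {B : Finset β // ↑B ⊆ f n}, #(↑(S B.1) : Set β)
              ≤ κ * ℵ₀ := mul_le_mul' hidx hsup
            _ ≤ κ * κ := mul_le_mul' le_rfl hκ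
            _ = κ := Cardinal.mul_eq_self hκ
        calc #(f n) + _ ≤ κ + κ := add_le_add ih h1
          _ = κ := Cardinal.add_eq_self hκ
  refine ⟨⋃ n, f n, ?_, ?_, ?_, ?_⟩
  · exact hf0 ▸ Set.subset_iUnion f 0
  · exact Set.iUnion_subset hT'
  · intro B hB
    have hmem : ∀ b ∈ B, ∃ n, b ∈ f n := fun b hb =>
      Set.mem_iUnion.mp (hB (Finset.mem_coe.mpr hb))
    choose g hg using hmem
    set N := B.attach.sup fun x => g x.1 x.2 with hN
    have hBN : ↑B ⊆ f N := by
      intro b hb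
      have hb' : b ∈ B := Finset.mem_coe.mp hb
      exact hmono (Finset.le_sup (f := fun x : {x // x ∈ B} => g x.1 x.2)
        (Finset.mem_attach B ⟨b, hb'⟩)) (hg b hb')
    have : ↑(S B) ⊆ f (N + 1) := by
      rw [hfs]
      intro y hy
      exact Set.mem_union_right _ (Set.mem_iUnion.mpr ⟨⟨B, hBN⟩, hy⟩)
    exact this.trans (Set.subset_iUnion f (N + 1))
  · refine (Cardinal.mk_iUnion_le f).trans ?_
    have hsup : ⨆ n, #(f n) ≤ κ := ciSup_le' hcard
    calc #ℕ * ⨆ n, #(f n) ≤ ℵ₀ * κ := by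
          rw [Cardinal.mk_nat]; exact mul_le_mul' le_rfl hsup
      _ ≤ κ * κ := mul_le_mul' hκ le_rfl
      _ = κ := Cardinal.mul_eq_self hκ

private lemma exists_free_finset {β : Type} [DecidableEq β] :
    ∀ (k : ℕ) (S : Finset β → Finset β) (T : Set β),
      (∀ B : Finset β, ↑B ⊆ T → ↑(S B) ⊆ T) → Cardinal.aleph k ≤ #T →
      ∃ Y : Finset β, ↑Y ⊆ T ∧ Y.card = k ∧ ∀ B ⊆ Y, S B ∩ Y ⊆ B := by
  intro k
  induction k with
  | zero =>
      intro S T _ _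
      refine ⟨∅, by simp, rfl, fun B hB => ?_⟩
      rw [Finset.subset_empty.mp hB]
      simp
  | succ k ih =>
      intro S T hT hκ
      classical
      have hmon : Cardinal.aleph (k : Ordinal) ≤ Cardinal.aleph ((k : ℕ) + 1 : ℕ) := by
        apply Cardinal.aleph_le_aleph.mpr
        exact_mod_cast Nat.le_succ k
      have hk : Cardinal.aleph k ≤ #T := hmon.trans hκ
      obtain ⟨M₀, hM₀T, hM₀card⟩ := Cardinal.le_mk_iff_exists_subset.mp hk
      obtain ⟨M, hM₀M, hMT, hMcl, hMcard⟩ :=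
        exists_closure S T hT M₀ hM₀T (Cardinal.aleph0_le_aleph _) (le_of_eq hM₀card)
      have hMk : Cardinal.aleph k ≤ #M := hM₀card ▸ Cardinal.mk_le_mk_of_subset hM₀M
      have hx : ∃ x ∈ T, x ∉ M := by
        by_contra h
        push_neg at h
        have h1 : #T ≤ #M := Cardinal.mk_le_mk_of_subset h
        have h2 : Cardinal.aleph ((k : ℕ) + 1 : ℕ) ≤ Cardinal.aleph k :=
          (hκ.trans h1).trans hMcard
        have h3 : (k : Ordinal) < ((k : ℕ) + 1 : ℕ) := by exact_mod_cast Nat.lt_succ_self k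
        exact absurd (Cardinal.aleph_lt_aleph.mpr h3) (not_lt.mpr h2)
      obtain ⟨x, hxT, hxM⟩ := hx
      obtain ⟨S', hS'⟩ : ∃ S' : Finset β → Finset β,
          ∀ B, S' B = (S B ∪ S (insert x B)).filter (· ∈ M) :=
        ⟨fun B => (S B ∪ S (insert x B)).filter (· ∈ M), fun _ => rfl⟩
      have hS'cl : ∀ B : Finset β, ↑B ⊆ M → ↑(S' B) ⊆ M := by
        intro B _ b hb
        rw [hS'] at hb
        exact (Finset.mem_filter.mp (Finset.mem_coe.mp hb)).2
      obtain ⟨Y', hY'M, hY'card, hY'free⟩ := ih S' M hS'cl hMk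
      have hxY' : x ∉ Y' := fun h => hxM (hY'M (Finset.mem_coe.mpr h))
      refine ⟨insert x Y', ?_, ?_, ?_⟩
      · intro b hb
        rcases Finset.mem_insert.mp (Finset.mem_coe.mp hb) with rfl | hbY'
        · exact hxT
        · exact hMT (hY'M (Finset.mem_coe.mpr hbY'))
      · rw [Finset.card_insert_of_notMem hxY', hY'card]
      · intro B hB y hy
        rcases Finset.mem_inter.mp hy with ⟨hyS, hyY⟩
        rcases Finset.mem_insert.mp hyY with rfl | hyY'
        · -- y = x
          by_contra hxB
          have hBY' : B ⊆ Y' := by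
            intro b hb
            rcases Finset.mem_insert.mp (hB hb) with rfl | h
            · exact absurd hb hxB
            · exact h
          have hBM : ↑B ⊆ M := fun b hb => hY'M (Finset.mem_coe.mpr (hBY' (Finset.mem_coe.mp hb)))
          exact hxM (hMcl B hBM (Finset.mem_coe.mpr hyS))
        · have hyM : y ∈ M := hY'M (Finset.mem_coe.mpr hyY')
          by_cases hxB : x ∈ B
          · have hB0 : B.erase x ⊆ Y' := by
              intro b hb
              rcases Finset.mem_insert.mp (hB (Finset.mem_of_mem_erase hb)) with rfl | h
              · exact absurd rfl (Finset.ne_of_mem_erase hb)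
              · exact h
            have hy' : y ∈ S' (B.erase x) := by
              rw [hS']
              refine Finset.mem_filter.mpr ⟨Finset.mem_union_right _ ?_, hyM⟩
              rwa [Finset.insert_erase hxB]
            have := hY'free (B.erase x) hB0 (Finset.mem_inter.mpr ⟨hy', hyY'⟩)
            exact Finset.erase_subset x B this
          · have hBY' : B ⊆ Y' := by
              intro b hb
              rcases Finset.mem_insert.mp (hB hb) with rfl | h
              · exact absurd hb hxB
              · exact h
            have hy' : y ∈ S' B := by
              rw [hS']
              exact Finset.mem_filter.mpr ⟨Finset.mem_union_left _ hyS, hyM⟩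
            exact hY'free B hBY' (Finset.mem_inter.mpr ⟨hy', hyY'⟩)

private lemma omegaN_nonempty (n : ℕ) : Nonempty (OmegaN n) := by
  refine Ordinal.toType_nonempty_iff_ne_zero.mpr ?_
  rw [Ne, Cardinal.ord_eq_zero]
  exact (aleph0_pos.trans_le (Cardinal.aleph0_le_aleph _)).ne'

private lemma exists_isFree {α : Type*} [DecidableEq α] (𝓕 : Finset (Finset α)) :
    ∃ n, IsFree 𝓕 n := by
  classical
  set U : Finset α := 𝓕.sup id with hU
  refine ⟨U.card, ?_⟩
  intro S
  haveI : Nonempty (OmegaN U.card) := omegaN_nonempty _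
  have hcard : Cardinal.aleph U.card ≤ #(Set.univ : Set (OmegaN U.card)) := by
    rw [Cardinal.mk_univ, Cardinal.mk_ord_toType]
  obtain ⟨Yf, hYT, hYcard, hYfree⟩ :=
    exists_free_finset U.card S Set.univ (fun _ _ => Set.subset_univ _) hcard
  have ecard : Fintype.card (↥U) = Fintype.card (↥Yf) := by
    rw [Fintype.card_coe, Fintype.card_coe, hYcard]
  obtain ⟨e⟩ : Nonempty ((↥U) ≃ (↥Yf)) := ⟨Fintype.equivOfCardEq ecard⟩
  obtain ⟨u, hu⟩ : ∃ u : α → OmegaN U.card, ∀ a (h : a ∈ U), u a = ((e ⟨a, h⟩ : ↥Yf) : OmegaN U.card) := by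
    refine ⟨fun a => if h : a ∈ U then ((e ⟨a, h⟩ : ↥Yf) : OmegaN U.card)
      else Classical.arbitrary _, fun a h => ?_⟩
    simp [h]
  have hinj : Set.InjOn u ↑U := by
    intro a ha b hb hab
    have ha' : a ∈ U := Finset.mem_coe.mp ha
    have hb' : b ∈ U := Finset.mem_coe.mp hb
    rw [hu a ha', hu b hb'] at hab
    have := e.injective (Subtype.ext hab)
    exact congrArg Subtype.val this
  have himg : U.image u = Yf := by
    apply Finset.eq_of_subset_of_card_le
    · intro y hy
      rcases Finset.mem_image.mp hy with ⟨a, ha, rfl⟩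
      rw [hu a ha]
      exact (e ⟨a, ha⟩).2
    · rw [hYcard]
      exact le_of_eq (Finset.card_image_of_injOn hinj).symm
  refine ⟨u, hinj, ?_⟩
  intro A hA
  have hAU : A ⊆ U := Finset.le_sup (f := id) hA
  have hAY : A.image u ⊆ Yf := himg ▸ Finset.image_subset_image hAU
  rw [himg]
  exact hYfree (A.image u) hAY

private lemma isFree_restrict {α : Type*} [DecidableEq α] (𝓕 : Finset (Finset α))
    (Y : Finset α) {n : ℕ} (h : IsFree 𝓕 n) :
    IsFree (𝓕.image (fun A => A ∩ Y)) n := by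
  classical
  intro S
  obtain ⟨u, hinj, hfree⟩ := h (fun C => C.powerset.sup S)
  set U : Finset α := 𝓕.sup id with hUdef
  set G : Finset (Finset α) := 𝓕.image (fun A => A ∩ Y) with hGdef
  have hVU : G.sup id ⊆ U :=
    Finset.sup_le fun A' hA' => by
      rcases Finset.mem_image.mp hA' with ⟨A, hA, rfl⟩
      exact Finset.inter_subset_left.trans (Finset.le_sup (f := id) hA)
  have hVY : G.sup id ⊆ Y :=
    Finset.sup_le fun A' hA' => by
      rcases Finset.mem_image.mp hA' with ⟨A, hA, rfl⟩
      exact Finset.inter_subset_right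
  refine ⟨u, hinj.mono (by exact_mod_cast hVU), ?_⟩
  intro A' hA' y hy
  rcases Finset.mem_inter.mp hy with ⟨hyS, hyV⟩
  rcases Finset.mem_image.mp hA' with ⟨A, hA, rfl⟩
  have h1 : (A ∩ Y).image u ⊆ A.image u := Finset.image_subset_image Finset.inter_subset_left
  have h2' : S ((A ∩ Y).image u) ⊆ (A.image u).powerset.sup S :=
    Finset.le_sup (Finset.mem_powerset.mpr h1)
  have h2 : y ∈ (A.image u).powerset.sup S := h2' hyS
  rcases Finset.mem_image.mp hyV with ⟨b, hbV, rfl⟩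
  have hyU : u b ∈ U.image u := Finset.mem_image_of_mem u (hVU hbV)
  have h3 : u b ∈ A.image u := hfree A hA (Finset.mem_inter.mpr ⟨h2, hyU⟩)
  rcases Finset.mem_image.mp h3 with ⟨a, haA, hab⟩
  have hAU : A ⊆ U := Finset.le_sup (f := id) hA
  have hab' : a = b := hinj (Finset.mem_coe.mpr (hAU haA)) (Finset.mem_coe.mpr (hVU hbV)) hab
  rw [← hab]
  apply Finset.mem_image_of_mem u
  exact Finset.mem_inter.mpr ⟨haA, hab' ▸ hVY hbV⟩

end Aux

/-- Restriction does not increase `𝔣𝔯`: if `𝓕` consists of subsets of the finite set `X`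
and `Y ⊆ X`, then `𝔣𝔯 (𝓕|_Y) ≤ 𝔣𝔯 𝓕`. -/
theorem statement5 {α : Type*} [DecidableEq α] (X : Finset α) (𝓕 : Finset (Finset α))
    (h𝓕 : ∀ A ∈ 𝓕, A ⊆ X) (Y : Finset α) (hY : Y ⊆ X) :
    fr (𝓕.image (fun A => A ∩ Y)) ≤ fr 𝓕 := by
  obtain ⟨m, hm⟩ := exists_isFree 𝓕
  have hne : {n | IsFree 𝓕 n}.Nonempty := ⟨m, hm⟩
  have h1 : IsFree 𝓕 (fr 𝓕) := Nat.sInf_mem hne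
  exact Nat.sInf_le (isFree_restrict 𝓕 Y h1)

end
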